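/- Let R be a commutative Noetherian ring and f : M → Q a surjective but not injective homomorphism of finitely generated R-modules. Then there exists an associated prime 𝔭 of M such that the length of the 𝔭-torsion of Q_𝔭 is strictly less than the length of the 𝔭-torsion of M_𝔭, while for every prime 𝔮 not in the support of ker f, the 𝔭-torsion lengths of M_𝔮 and Q_𝔮 agree. -/

import Mathlib

open Order


section OrderAux

lemma myNatSeries_length_le_last (p : LTSeries ℕ) : p.length ≤ p.last := by
  suffices H : ∀ n (p : LTSeries ℕ), p.length = n → p.length ≤ p.last from H _ p rfl
  intro n
  induction n with
  | zero => intro p h; omega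
  | succ n ih =>
    intro p h
    have h1 : p.eraseLast.last < p.last := p.eraseLast_last_rel_last (by omega)
    have h2 := ih p.eraseLast (by simp [RelSeries.eraseLast_length, h])
    have h3 : p.eraseLast.length = p.length - 1 := by simp [RelSeries.eraseLast_length]
    omega

lemma myHeight_add_one_le {α : Type*} [Preorder α] {x y : α} (h : x < y) :
    Order.height x + 1 ≤ Order.height y := by
  rw [Order.height_eq_iSup_lt_height y]
  exact le_iSup₂ (f := fun z (_ : z < y) => Order.height z + 1) x h

lemma myProdSeries_length_le {β γ : Type*} [Preorder β] [Preorder γ] (p : LTSeries (β × γ)) :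
    (p.length : ℕ∞) ≤ Order.height p.last.1 + Order.height p.last.2 := by
  suffices H : ∀ n (p : LTSeries (β × γ)), p.length = n →
      (p.length : ℕ∞) ≤ Order.height p.last.1 + Order.height p.last.2 from H _ p rfl
  intro n
  induction n with
  | zero => intro p h; simp [h]
  | succ n ih =>
    intro p h
    have hrel : p.eraseLast.last < p.last := p.eraseLast_last_rel_last (by omega)
    have h2 := ih p.eraseLast (by simp [RelSeries.eraseLast_length, h])
    rw [RelSeries.eraseLast_length, h] at h2
    simp only [Nat.add_sub_cancel] at h2
    have hcast : ((p.length : ℕ∞)) = (n : ℕ∞) + 1 := by rw [h]; push_cast; ring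
    rw [hcast]
    rcases Prod.lt_iff.mp hrel with ⟨hl, hr⟩ | ⟨hl, hr⟩
    · calc (n : ℕ∞) + 1
          ≤ (Order.height p.eraseLast.last.1 + Order.height p.eraseLast.last.2) + 1 :=
            add_le_add_left h2 1
        _ = (Order.height p.eraseLast.last.1 + 1) + Order.height p.eraseLast.last.2 := by ring
        _ ≤ Order.height p.last.1 + Order.height p.last.2 :=
            add_le_add (myHeight_add_one_le hl) (Order.height_mono hr)
    · calc (n : ℕ∞) + 1
          ≤ (Order.height p.eraseLast.last.1 + Order.height p.eraseLast.last.2) + 1 :=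
            add_le_add_left h2 1
        _ = Order.height p.eraseLast.last.1 + (Order.height p.eraseLast.last.2 + 1) := by ring
        _ ≤ Order.height p.last.1 + Order.height p.last.2 :=
            add_le_add (Order.height_mono hl) (myHeight_add_one_le hr)

end OrderAux

lemma myFin_of_submodule {B X : Type*} [Ring B] [AddCommGroup X] [Module B X]
    (N : Submodule B X)
    (hN : Order.height (⊤ : Submodule B N) ≠ ⊤)
    (hQ : Order.height (⊤ : Submodule B (X ⧸ N)) ≠ ⊤) :
    Order.height (⊤ : Submodule B X) ≠ ⊤ := by
  set F : Submodule B X → Submodule B N × Submodule B (X ⧸ N) :=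
    fun W => (W.comap N.subtype, W.map N.mkQ) with hFdef
  have hF : StrictMono F := by
    intro W W' h
    refine lt_of_le_of_ne ⟨Submodule.comap_mono h.le, Submodule.map_mono h.le⟩ fun e => ?_
    have e1 : W.comap N.subtype = W'.comap N.subtype := congrArg Prod.fst e
    have e2 : W.map N.mkQ = W'.map N.mkQ := congrArg Prod.snd e
    refine h.ne (le_antisymm h.le fun w' hw' => ?_)
    have hmem : N.mkQ w' ∈ W.map N.mkQ := by
      rw [e2]; exact Submodule.mem_map_of_mem hw'
    obtain ⟨w, hw, hww⟩ := hmem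
    have hd : w' - w ∈ N := by
      have := (Submodule.Quotient.eq N).mp hww
      simpa using (neg_mem this : -(w - w') ∈ N)
    have hd' : (⟨w' - w, hd⟩ : N) ∈ W.comap N.subtype := by
      rw [e1]
      exact Submodule.mem_comap.mpr (by
        simpa using W'.sub_mem hw' (h.le hw))
    have : w' - w ∈ W := hd'
    simpa using W.add_mem this hw
  have hsum : Order.height (⊤ : Submodule B N) + Order.height (⊤ : Submodule B (X ⧸ N)) ≠ ⊤ :=
    WithTop.add_ne_top.mpr ⟨hN, hQ⟩
  refine ne_top_of_le_ne_top hsum ?_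
  apply Order.height_le
  intro p hp
  have := myProdSeries_length_le (p.map F hF)
  simp only [RelSeries.last_map] at this
  refine le_trans (by exact this) (add_le_add (Order.height_mono le_top) (Order.height_mono le_top))

lemma myVS {B : Type*} [CommRing B] (I : Ideal B) [I.IsMaximal]
    {V : Type*} [AddCommGroup V] [Module B V] [Module.Finite B V]
    (hV : Module.IsTorsionBySet B V I) :
    Order.height (⊤ : Submodule B V) ≠ ⊤ := by
  letI := hV.module
  letI : IsScalarTower B (B ⧸ I) V := hV.isScalarTower
  haveI : Module.Finite (B ⧸ I) V := Module.Finite.of_restrictScalars_finite B (B ⧸ I) V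
  letI : Field (B ⧸ I) := Ideal.Quotient.field I
  set F : Submodule B V → Submodule (B ⧸ I) V := fun W =>
    { carrier := W
      add_mem' := fun h1 h2 => W.add_mem h1 h2
      zero_mem' := W.zero_mem
      smul_mem' := by
        rintro ⟨b⟩ x hx
        exact (hV.mk_smul b x) ▸ W.smul_mem b hx } with hFdef
  have hF : StrictMono F := by
    intro W W' h
    refine lt_of_le_of_ne (fun x hx => h.le hx) fun e => h.ne ?_
    ext x
    exact SetLike.ext_iff.mp e x
  have hF2 : StrictMono fun W : Submodule B V => Module.finrank (B ⧸ I) (F W) :=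
    fun W W' h => Submodule.finrank_lt_finrank_of_lt (hF h)
  refine ne_top_of_le_ne_top (by simp : ((Module.finrank (B ⧸ I) V : ℕ∞)) ≠ ⊤) ?_
  apply Order.height_le
  intro p hp
  have h1 := myNatSeries_length_le_last (p.map _ hF2)
  simp only [RelSeries.last_map] at h1
  have h2 : Module.finrank (B ⧸ I) (F p.last) ≤ Module.finrank (B ⧸ I) V :=
    Submodule.finrank_le _
  exact_mod_cast le_trans (Nat.cast_le.mpr h1) (Nat.cast_le.mpr h2)

universe v

lemma myHT {B : Type*} [CommRing B] (I : Ideal B) [I.IsMaximal] (n : ℕ) :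
    ∀ (V : Type v) [AddCommGroup V] [Module B V] [IsNoetherian B V],
      Module.IsTorsionBySet B V ((I ^ n : Ideal B) : Set B) →
      Order.height (⊤ : Submodule B V) ≠ ⊤ := by
  induction n with
  | zero =>
    intro V _ _ _ hV
    have hsub : Subsingleton V := ⟨fun x y => by
      have hx := hV (x := x) (a := ⟨1, by simp [Ideal.one_eq_top]⟩)
      have hy := hV (x := y) (a := ⟨1, by simp [Ideal.one_eq_top]⟩)
      simp only [one_smul] at hx hy
      rw [hx, hy]⟩
    have : IsMin (⊤ : Submodule B V) := by
      intro W _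
      intro x _
      have : x = 0 := Subsingleton.elim x 0
      rw [this]; exact W.zero_mem
    rw [Order.height_eq_zero.mpr this]
    simp
  | succ n ih =>
    intro V _ _ _ hV
    set W := Submodule.torsionBySet B V ((I ^ n : Ideal B) : Set B) with hW
    apply myFin_of_submodule W
    · exact ih W (Submodule.torsionBySet_isTorsionBySet _)
    · have hQ : Module.IsTorsionBySet B (V ⧸ W) (I : Set B) := by
        rw [Module.isTorsionBySet_quotient_iff]
        intro x r hr
        rw [hW, Submodule.mem_torsionBySet_iff]
        rintro ⟨a, ha⟩
        have hmem : a * r ∈ I ^ (n + 1) := by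
          rw [pow_succ]; exact Ideal.mul_mem_mul ha hr
        have h0 := hV (x := x) (a := ⟨a * r, hmem⟩)
        simpa [mul_smul] using h0
      exact myVS I hQ

lemma myLtOfSurj {B X Y : Type*} [CommRing B] [AddCommGroup X] [Module B X]
    [AddCommGroup Y] [Module B Y] (π : X →ₗ[B] Y) (hsurj : Function.Surjective π)
    (hker : LinearMap.ker π ≠ ⊥) (hfin : Order.height (⊤ : Submodule B X) ≠ ⊤) :
    Order.height (⊤ : Submodule B Y) < Order.height (⊤ : Submodule B X) := by
  have hc : StrictMono (Submodule.comap π) := fun W W' h =>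
    lt_of_le_of_ne (Submodule.comap_mono h.le)
      (fun e => h.ne (Submodule.comap_injective_of_surjective hsurj e))
  have hle : Order.height (⊤ : Submodule B Y) ≤ Order.height (⊤ : Submodule B X) := by
    have := Order.height_le_height_apply_of_strictMono _ hc ⊤
    rwa [Submodule.comap_top] at this
  refine lt_of_le_of_ne hle fun he => ?_
  obtain ⟨m, hm⟩ := WithTop.ne_top_iff_exists.mp hfin
  obtain ⟨p, hlast, hlen⟩ := Order.exists_series_of_height_eq_coe _ (he.symm ▸ hm.symm :
    Order.height (⊤ : Submodule B Y) = m)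
  have hbot : (⊥ : Submodule B X) < (p.map (Submodule.comap π) hc).head := by
    rw [LTSeries.head_map]
    refine bot_lt_iff_ne_bot.mpr fun hb => hker (le_antisymm ?_ bot_le)
    calc LinearMap.ker π = Submodule.comap π ⊥ := by rw [Submodule.comap_bot]
      _ ≤ Submodule.comap π p.head := Submodule.comap_mono bot_le
      _ = ⊥ := hb
  have hlast' : ((p.map (Submodule.comap π) hc).cons ⊥ hbot).last = ⊤ := by
    rw [RelSeries.last_cons, LTSeries.last_map, hlast, Submodule.comap_top]
  have hlen' : ((p.map (Submodule.comap π) hc).cons ⊥ hbot).length = m + 1 := by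
    show 0 + (p.map (Submodule.comap π) hc).length + 1 = m + 1; simp [hlen]
  have hfinal : ((m + 1 : ℕ) : ℕ∞) ≤ ((m : ℕ) : ℕ∞) := by
    calc ((m + 1 : ℕ) : ℕ∞)
        = (((p.map (Submodule.comap π) hc).cons ⊥ hbot).length : ℕ∞) := by rw [hlen']
      _ ≤ Order.height ((p.map (Submodule.comap π) hc).cons ⊥ hbot).last :=
          Order.length_le_height_last
      _ = Order.height (⊤ : Submodule B X) := by rw [hlast']
      _ = ((m : ℕ) : ℕ∞) := hm.symm
  norm_cast at hfinal
  omega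


/-- The `𝔭`-torsion submodule `H⁰_𝔭(M)` of the localization `M_𝔭`: the elements of
`LocalizedModule 𝔭.primeCompl M` annihilated by some power of `𝔭 R_𝔭`. -/
noncomputable def pTorsion {R : Type*} [CommRing R] (p : Ideal R) [p.IsPrime]
    (M : Type*) [AddCommGroup M] [Module R M] :
    Submodule (Localization.AtPrime p) (LocalizedModule p.primeCompl M) :=
  ⨆ n : ℕ,
    Submodule.torsionBySet (Localization.AtPrime p) (LocalizedModule p.primeCompl M)
      ((Ideal.map (algebraMap R (Localization.AtPrime p)) p ^ n :
        Ideal (Localization.AtPrime p)) : Set (Localization.AtPrime p))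

/-- The length of a module: the Krull dimension of its lattice of submodules
(`⊥` never occurs; the value is `⊤` when there are chains of unbounded length). -/
noncomputable def modLength (A : Type*) (M : Type*) [Ring A] [AddCommGroup M] [Module A M] :
    WithBot ℕ∞ :=
  Order.krullDim (Submodule A M)

/-- The local multiplicity `ℓ_𝔭(M)`: the length over `R_𝔭` of the `𝔭`-torsion submodule
of the localization `M_𝔭`. -/
noncomputable def lmult {R : Type*} [CommRing R] (p : PrimeSpectrum R)
    (M : Type*) [AddCommGroup M] [Module R M] : WithBot ℕ∞ :=
  modLength (Localization.AtPrime p.asIdeal) (pTorsion p.asIdeal M)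

lemma modLength_eq_height (A M : Type*) [Ring A] [AddCommGroup M] [Module A M] :
    modLength A M = ((Order.height (⊤ : Submodule A M) : ℕ∞) : WithBot ℕ∞) :=
  (Order.height_top_eq_krullDim).symm

lemma map_torsionBySet_equiv {A X Y : Type*} [CommRing A] [AddCommGroup X] [Module A X]
    [AddCommGroup Y] [Module A Y] (e : X ≃ₗ[A] Y) (s : Set A) :
    (Submodule.torsionBySet A X s).map (e : X →ₗ[A] Y) = Submodule.torsionBySet A Y s := by
  ext y
  simp only [Submodule.mem_map, Submodule.mem_torsionBySet_iff]
  constructor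
  · rintro ⟨x, hx, rfl⟩ a
    rw [← map_smul, hx a, map_zero]
  · intro hy
    refine ⟨e.symm y, fun a => ?_, by simp⟩
    have : e ((a : A) • e.symm y) = 0 := by rw [map_smul, e.apply_symm_apply, hy a]
    simpa using congrArg e.symm this

lemma lmult_eq_of_equiv {R : Type*} [CommRing R] (q : PrimeSpectrum R)
    {M Q : Type*} [AddCommGroup M] [Module R M] [AddCommGroup Q] [Module R Q]
    (e : LocalizedModule q.asIdeal.primeCompl M ≃ₗ[Localization.AtPrime q.asIdeal]
      LocalizedModule q.asIdeal.primeCompl Q) :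
    lmult q M = lmult q Q := by
  have hmap : (pTorsion q.asIdeal M).map (e : _ →ₗ[Localization.AtPrime q.asIdeal] _)
      = pTorsion q.asIdeal Q := by
    rw [pTorsion, pTorsion, Submodule.map_iSup]
    exact iSup_congr fun n => map_torsionBySet_equiv e _
  have e2 : (pTorsion q.asIdeal M) ≃ₗ[Localization.AtPrime q.asIdeal] (pTorsion q.asIdeal Q) :=
    (e.submoduleMap (pTorsion q.asIdeal M)).trans (LinearEquiv.ofEq _ _ hmap)
  exact Order.krullDim_eq_of_orderIso (Submodule.orderIsoMapComap e2)

/-- If `f : M → Q` is a surjective but not injective map of finitely generated modules over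
a commutative Noetherian ring, then there is an associated prime `𝔭` of `M` at which the
local multiplicity of `Q` is strictly smaller than that of `M`, while at every prime outside
the support of `ker f` the local multiplicities of `M` and `Q` agree. -/
theorem lmult_lt_of_surjective_not_injective {R : Type*} [CommRing R] [IsNoetherianRing R]
    {M Q : Type*} [AddCommGroup M] [Module R M] [Module.Finite R M]
    [AddCommGroup Q] [Module R Q] [Module.Finite R Q]
    (f : M →ₗ[R] Q) (hsurj : Function.Surjective f) (hinj : ¬ Function.Injective f) :
    ∃ p : PrimeSpectrum R, p.asIdeal ∈ associatedPrimes R M ∧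
      lmult p Q < lmult p M ∧
      ∀ q : PrimeSpectrum R, q ∉ Module.support R (LinearMap.ker f) →
        lmult q M = lmult q Q := by
  classical
  set N := LinearMap.ker f with hNdef
  haveI hNnt : Nontrivial ↥N := by
    refine Submodule.nontrivial_iff_ne_bot.mpr fun h => hinj (LinearMap.ker_eq_bot.mp h)
  have hann : Module.annihilator R ↥N ≠ ⊤ := by
    rw [Ideal.ne_top_iff_one]
    intro h
    obtain ⟨x, hx⟩ := exists_ne (0 : ↥N)
    exact hx (by simpa using Module.mem_annihilator.mp h x)
  obtain ⟨mI, hmI, hlemI⟩ := Ideal.exists_le_maximal _ hann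
  haveI := hmI.isPrime
  obtain ⟨P, hPmin, -⟩ := Ideal.exists_minimalPrimes_le hlemI
  haveI hPprime : P.IsPrime := hPmin.1.1
  set pp : PrimeSpectrum R := ⟨P, hPprime⟩ with hppdef
  set S := P.primeCompl with hSdef
  set A := Localization.AtPrime P with hAdef
  set qI : Ideal A := Ideal.map (algebraMap R A) P with hqIdef
  haveI : IsNoetherianRing A := IsLocalization.isNoetherianRing S A ‹IsNoetherianRing R›
  haveI hqImax : qI.IsMaximal := by
    rw [hqIdef, Localization.AtPrime.map_eq_maximalIdeal]
    exact IsLocalRing.maximalIdeal.isMaximal A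
  have hsupp : pp ∈ Module.support R ↥N := by
    rw [Module.support_eq_zeroLocus, PrimeSpectrum.mem_zeroLocus]
    exact hPmin.1.2
  set Np := LocalizedModule S ↥N with hNp
  set Mp := LocalizedModule S M with hMp
  set Qp := LocalizedModule S Q with hQp
  haveI hNt : Nontrivial Np := hsupp
  set ι : Np →ₗ[A] Mp := LocalizedModule.map S (N.subtype) with hι
  set φ : Mp →ₗ[A] Qp := LocalizedModule.map S f with hφ
  have hexact : Function.Exact ι φ :=
    LocalizedModule.map_exact S N.subtype f f.exact_subtype_ker_map
  -- a power of qI annihilates Np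
  have hqrad : qI ≤ (Module.annihilator A Np).radical := by
    rw [Ideal.radical_eq_sInf]
    refine le_sInf ?_
    rintro P' ⟨hJP', hP'prime⟩
    have hannle : Module.annihilator R ↥N ≤ P'.comap (algebraMap R A) := by
      intro a ha
      refine Ideal.mem_comap.mpr (hJP' ?_)
      rw [Module.mem_annihilator]
      intro z
      induction z using LocalizedModule.induction_on with
      | _ w s =>
        rw [algebraMap_smul, LocalizedModule.smul'_mk, Module.mem_annihilator.mp ha w,
          LocalizedModule.zero_mk]
    have hcomle : P'.comap (algebraMap R A) ≤ P := by
      intro r hr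
      by_contra hrP
      exact hP'prime.ne_top (Ideal.eq_top_of_isUnit_mem _ hr
        (IsLocalization.map_units A (⟨r, hrP⟩ : S)))
    haveI := hP'prime.comap (algebraMap R A)
    have hPle' : P ≤ P'.comap (algebraMap R A) := hPmin.2 ⟨inferInstance, hannle⟩ hcomle
    calc qI = Ideal.map (algebraMap R A) P := rfl
      _ ≤ Ideal.map (algebraMap R A) (P'.comap (algebraMap R A)) := Ideal.map_mono hPle'
      _ ≤ P' := Ideal.map_comap_le
  obtain ⟨k0, hk0⟩ := Ideal.exists_pow_le_of_le_radical_of_fg hqrad (IsNoetherian.noetherian qI)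
  set kk := k0 + 1 with hkk
  have hkkann : qI ^ kk ≤ Module.annihilator A Np :=
    le_trans (Ideal.pow_le_pow_right (Nat.le_succ k0)) hk0
  have hkill : ∀ a ∈ qI ^ kk, ∀ z : Np, a • z = 0 := fun a ha z =>
    Module.mem_annihilator.mp (hkkann ha) z
  -- P is an associated prime of N, hence of M
  obtain ⟨P', hP'⟩ := associatedPrimes.nonempty A Np
  have hP'top := hP'.annihilator_le
  obtain ⟨hP'prime, x, hx⟩ := isAssociatedPrime_iff.mp hP'
  rw [Submodule.bot_colon'] at hx
  have hq_topann : qI ^ kk ≤ (⊤ : Submodule A Np).annihilator := fun a ha =>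
    Submodule.mem_annihilator.mpr fun z _ => hkill a ha z
  have h1 : qI ≤ P' := hP'prime.le_of_pow_le (le_trans hq_topann hP'top)
  have h2 : P' ≤ qI := by
    have := IsLocalRing.le_maximalIdeal (R := A) hP'prime.ne_top
    rwa [← Localization.AtPrime.map_eq_maximalIdeal] at this
  have hP'q : P' = qI := le_antisymm h2 h1
  have hxex : ∃ (y : ↥N) (s : S), x = LocalizedModule.mk y s := by
    induction x using LocalizedModule.induction_on with
    | _ y s => exact ⟨y, s, rfl⟩
  obtain ⟨y, s, hxmk⟩ := hxex
  have hmk1 : (LocalizedModule.mk y 1 : Np) = (algebraMap R A (s : R)) • x := by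
    rw [hxmk, algebraMap_smul, LocalizedModule.smul'_mk, ← Submonoid.smul_def,
      LocalizedModule.mk_cancel]
  have hq_ann : qI = (Submodule.span A {(LocalizedModule.mk y 1 : Np)}).annihilator := by
    rw [hmk1, Submodule.span_singleton_smul_eq (IsLocalization.map_units A s) x, ← hx, hP'q]
  obtain ⟨t, ht⟩ := (IsNoetherian.noetherian P : P.FG)
  have hstep : ∀ r ∈ t, ∃ c : S, (c : R) • (r • y) = 0 := by
    intro r hr
    have hrP : r ∈ P := ht ▸ Submodule.subset_span hr
    have hz : (algebraMap R A r) • (LocalizedModule.mk y 1 : Np) = 0 :=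
      (Submodule.mem_annihilator_span_singleton _ _).mp
        (hq_ann ▸ Ideal.mem_map_of_mem _ hrP)
    rw [algebraMap_smul, LocalizedModule.smul'_mk] at hz
    obtain ⟨u, hu⟩ := LocalizedModule.mk_eq.mp (hz.trans (LocalizedModule.zero_mk 1).symm)
    refine ⟨u, ?_⟩
    simpa [Submonoid.smul_def] using hu
  choose c hc using hstep
  set uR : R := ∏ r ∈ t.attach, (c r.1 r.2 : R) with huR
  have huS : uR ∈ S := Submonoid.prod_mem S fun r _ => (c r.1 r.2).2
  set m : ↥N := uR • y with hm
  have hPle : P ≤ (Submodule.span R {m}).annihilator := by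
    rw [← ht, Submodule.span_le]
    intro r hr
    rw [SetLike.mem_coe, Submodule.mem_annihilator_span_singleton]
    have hsplit : r * uR =
        ((t.attach.erase ⟨r, hr⟩).prod fun r' => (c r'.1 r'.2 : R)) * ((c r hr : R) * r) := by
      rw [huR, ← Finset.mul_prod_erase t.attach _ (Finset.mem_attach t ⟨r, hr⟩)]
      ring
    rw [hm, smul_smul, hsplit, mul_smul, mul_smul, hc r hr, smul_zero]
  have hle2 : (Submodule.span R {m}).annihilator ≤ P := by
    intro r hr
    by_contra hrP
    rw [Submodule.mem_annihilator_span_singleton] at hr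
    have hrm : (r * uR) • y = 0 := by rw [mul_smul]; exact hr
    have hx0 : x = 0 := by
      rw [hxmk, ← LocalizedModule.zero_mk (S := S) s]
      refine LocalizedModule.mk_eq.mpr ⟨⟨r * uR, S.mul_mem hrP huS⟩, ?_⟩
      simp only [Submonoid.smul_def, smul_smul, smul_zero]
      rw [mul_comm (r * uR) (s : R), mul_smul, hrm, smul_zero]
    have hqtop : qI = ⊤ := by
      rw [← hP'q, hx, hx0, Submodule.span_zero_singleton, Submodule.annihilator_bot]
    exact hqImax.ne_top hqtop
  have hassN : IsAssociatedPrime P ↥N := isAssociatedPrime_iff.mpr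
    ⟨hPprime, m, by rw [Submodule.bot_colon']; exact (le_antisymm hle2 hPle).symm⟩
  have hassM : pp.asIdeal ∈ associatedPrimes R M :=
    associatedPrimes.subset_of_injective (Submodule.injective_subtype N) hassN
  -- Part 2: strict inequality of local multiplicities at P
  set FM : ℕ → Submodule A Mp :=
    (fun n => Submodule.torsionBySet A Mp ((qI ^ n : Ideal A) : Set A)) with hFM
  set FQ : ℕ → Submodule A Qp :=
    (fun n => Submodule.torsionBySet A Qp ((qI ^ n : Ideal A) : Set A)) with hFQ
  have hmonoM : Monotone FM := fun a b hab =>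
    Submodule.torsionBySet_le_torsionBySet_of_subset (Ideal.pow_le_pow_right hab)
  have hmonoQ : Monotone FQ := fun a b hab =>
    Submodule.torsionBySet_le_torsionBySet_of_subset (Ideal.pow_le_pow_right hab)
  have hTM : pTorsion P M = ⨆ n, FM n := rfl
  have hTQ : pTorsion P Q = ⨆ n, FQ n := rfl
  have hmapT : ∀ x ∈ pTorsion P M, φ x ∈ pTorsion P Q := by
    intro z hz
    rw [hTM, Submodule.mem_iSup_of_directed _ hmonoM.directed_le] at hz
    obtain ⟨n, hn⟩ := hz
    rw [hTQ]
    refine Submodule.mem_iSup_of_mem n ?_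
    rw [Submodule.mem_torsionBySet_iff] at hn ⊢
    intro a
    rw [← map_smul, hn a, map_zero]
  set π : ↥(pTorsion P M) →ₗ[A] ↥(pTorsion P Q) := φ.restrict hmapT with hπ
  have hker_tor : ∀ z, φ z = 0 → z ∈ FM kk := by
    intro z hz
    have hzr : z ∈ LinearMap.range ι := by
      rw [← LinearMap.exact_iff.mp hexact]
      exact LinearMap.mem_ker.mpr hz
    obtain ⟨w, rfl⟩ := hzr
    rw [Submodule.mem_torsionBySet_iff]
    rintro ⟨a, ha⟩
    rw [← map_smul, hkill a ha w, map_zero]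
  have hπsurj : Function.Surjective π := by
    rintro ⟨yy, hyy⟩
    have hyy2 := hyy
    rw [hTQ, Submodule.mem_iSup_of_directed _ hmonoQ.directed_le] at hyy2
    obtain ⟨n, hn⟩ := hyy2
    obtain ⟨xx, hxx⟩ := LocalizedModule.map_surjective S f hsurj yy
    have hx : xx ∈ FM (kk + n) := by
      rw [Submodule.mem_torsionBySet_iff]
      rintro ⟨a, ha⟩
      have ha' : a ∈ qI ^ kk * qI ^ n := by rw [← pow_add]; exact ha
      show a • xx = 0
      refine Submodule.mul_induction_on ha' ?_ ?_
      · intro b hb cc hcc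
        have h1 : φ (cc • xx) = 0 := by
          rw [map_smul, hxx]
          rw [Submodule.mem_torsionBySet_iff] at hn
          exact hn ⟨cc, hcc⟩
        have h2 := hker_tor _ h1
        rw [Submodule.mem_torsionBySet_iff] at h2
        rw [mul_smul]
        exact h2 ⟨b, hb⟩
      · intro a1 a2 ha1 ha2
        rw [add_smul, ha1, ha2, add_zero]
    refine ⟨⟨xx, hTM ▸ Submodule.mem_iSup_of_mem (kk + n) hx⟩, ?_⟩
    exact Subtype.ext (by simpa [hπ, LinearMap.restrict_apply] using hxx)
  have hπker : LinearMap.ker π ≠ ⊥ := by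
    obtain ⟨w, hw⟩ := exists_ne (0 : Np)
    have hz0 : ι w ≠ 0 := fun h =>
      hw (LocalizedModule.map_injective S N.subtype N.injective_subtype
        (by rw [h, map_zero]))
    have hzT : ι w ∈ pTorsion P M := by
      rw [hTM]
      refine Submodule.mem_iSup_of_mem kk ?_
      rw [Submodule.mem_torsionBySet_iff]
      rintro ⟨a, ha⟩
      rw [← map_smul, hkill a ha w, map_zero]
    intro hbot
    have hmem : (⟨ι w, hzT⟩ : ↥(pTorsion P M)) ∈ LinearMap.ker π := by
      rw [LinearMap.mem_ker]
      exact Subtype.ext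
        (by simpa [hπ, LinearMap.restrict_apply] using hexact.apply_apply_eq_zero w)
    rw [hbot, Submodule.mem_bot] at hmem
    exact hz0 (congrArg Subtype.val hmem)
  haveI : Module.Finite A Mp :=
    Module.Finite.of_isLocalizedModule S (LocalizedModule.mkLinearMap S M)
  haveI hNoeMp : IsNoetherian A Mp := inferInstance
  obtain ⟨n0, hn0⟩ := monotone_stabilizes_iff_noetherian.mpr hNoeMp ⟨FM, hmonoM⟩
  have hTMeq : pTorsion P M = FM n0 := by
    rw [hTM]
    refine le_antisymm (iSup_le fun i => ?_) (le_iSup FM n0)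
    rcases le_total i n0 with h | h
    · exact hmonoM h
    · exact (hn0 i h).ge
  have hTor : Module.IsTorsionBySet A (↥(pTorsion P M)) ((qI ^ n0 : Ideal A) : Set A) := by
    intro z a
    have hz : (z : Mp) ∈ FM n0 := hTMeq ▸ z.2
    rw [Submodule.mem_torsionBySet_iff] at hz
    exact Subtype.ext (hz a)
  have hfinM : Order.height (⊤ : Submodule A ↥(pTorsion P M)) ≠ ⊤ := myHT qI n0 _ hTor
  have hstrict := myLtOfSurj π hπsurj hπker hfinM
  have hlt : lmult pp Q < lmult pp M := by
    show modLength A ↥(pTorsion P Q) < modLength A ↥(pTorsion P M)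
    rw [modLength_eq_height, modLength_eq_height]
    exact_mod_cast hstrict
  refine ⟨pp, hassM, hlt, ?_⟩
  -- Part 3: equality away from the support of the kernel
  intro q hq
  rw [Module.notMem_support_iff] at hq
  set ιq := LocalizedModule.map q.asIdeal.primeCompl (N.subtype) with hιq
  set φq := LocalizedModule.map q.asIdeal.primeCompl f with hφq
  have hexq : Function.Exact ιq φq :=
    LocalizedModule.map_exact _ N.subtype f f.exact_subtype_ker_map
  have hker0 : LinearMap.ker φq = ⊥ := by
    rw [LinearMap.exact_iff.mp hexq]
    refine le_bot_iff.mp ?_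
    rintro z ⟨w, rfl⟩
    have : w = 0 := Subsingleton.elim w 0
    rw [this, map_zero]
    exact Submodule.zero_mem ⊥
  have hbij : Function.Bijective φq :=
    ⟨LinearMap.ker_eq_bot.mp hker0, LocalizedModule.map_surjective _ f hsurj⟩
  exact lmult_eq_of_equiv q (LinearEquiv.ofBijective φq hbij)
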